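/- Let k ≥ 3. Suppose C is a quaternary additive code of length 2^k − 1 and size 2^k all of whose nonzero codewords c satisfy w_1(c) = w_w(c) = w_{w^2}(c) = 2^{k-2} (an ASEP code of parameters [2^k−1, k/2, 3·2^{k-2}]_4). Let C' be the code of length 2^k − 1 spanned over F_2 by C together with the two all-constant vectors (1,1,…,1) and (w,w,…,w). Then C' has 2^{k+2} elements and minimum Hamming distance 3·2^{k-2} − 1, and its weight distribution is 1 + (2^{k+2} − 2^k − 3)·z^{3·2^{k-2}−1} + (2^k − 1)·z^{3·2^{k-2}} + 3·z^{2^k−1}. -/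

import Mathlib

/-- Hamming weight of a vector. -/
def wt {ι F : Type*} [Fintype ι] [Zero F] [DecidableEq F] (v : ι → F) : ℕ :=
  (Finset.univ.filter fun i => v i ≠ 0).card

/-- Number of coordinates of `v` equal to `α`. -/
def cnt {ι F : Type*} [Fintype ι] [DecidableEq F] (v : ι → F) (α : F) : ℕ :=
  (Finset.univ.filter fun i => v i = α).card

theorem stmt12 (k : ℕ) (hk : 3 ≤ k)
    (F : Type*) [Field F] [Fintype F] [DecidableEq F]
    (hF : Fintype.card F = 4) (w : F) (hw : w ^ 2 + w + 1 = 0)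
    (C : AddSubgroup (Fin (2 ^ k - 1) → F))
    (hcard : Nat.card C = 2 ^ k)
    (hasep : ∀ c ∈ C, c ≠ 0 →
      cnt c 1 = 2 ^ (k - 2) ∧ cnt c w = 2 ^ (k - 2) ∧ cnt c (w ^ 2) = 2 ^ (k - 2))
    (C' : AddSubgroup (Fin (2 ^ k - 1) → F))
    (hC' : C' = C ⊔ AddSubgroup.closure
      ({fun _ => (1 : F), fun _ => w} : Set (Fin (2 ^ k - 1) → F))) :
    Nat.card C' = 2 ^ (k + 2) ∧
    (∀ c ∈ C', c ≠ 0 → 3 * 2 ^ (k - 2) - 1 ≤ wt c) ∧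
    Set.ncard {c | c ∈ C' ∧ wt c = 3 * 2 ^ (k - 2) - 1} = 2 ^ (k + 2) - 2 ^ k - 3 ∧
    Set.ncard {c | c ∈ C' ∧ wt c = 3 * 2 ^ (k - 2)} = 2 ^ k - 1 ∧
    Set.ncard {c | c ∈ C' ∧ wt c = 2 ^ k - 1} = 3 := by
  classical
  -- arithmetic facts
  have hm2 : 2 ≤ 2 ^ (k - 2) := by
    calc (2:ℕ) = 2 ^ 1 := rfl
    _ ≤ 2 ^ (k - 2) := Nat.pow_le_pow_right (by norm_num) (by omega)
  have h4m : 2 ^ k = 4 * 2 ^ (k - 2) := by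
    have h : 2 ^ (k - 2) * 2 ^ 2 = 2 ^ k := by
      rw [← pow_add]; congr 1; omega
    norm_num at h; omega
  have h16 : 2 ^ (k + 2) = 4 * 2 ^ k := by rw [pow_add]; ring
  have hnpos : 0 < 2 ^ k - 1 := by omega
  have i0 : Fin (2 ^ k - 1) := ⟨0, hnpos⟩
  -- characteristic 2
  haveI hp2 : CharP F 2 := by
    obtain ⟨n, hp, hc⟩ := FiniteField.card F (ringChar F)
    have hd4 : ringChar F ∣ 4 := by
      rw [hF] at hc
      exact hc ▸ dvd_pow_self _ n.ne_zero
    have : ringChar F ∣ 2 := hp.dvd_of_dvd_pow (show ringChar F ∣ 2 ^ 2 by norm_num at hd4 ⊢; exact hd4)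
    have h2 : ringChar F = 2 := ((Nat.prime_dvd_prime_iff_eq hp Nat.prime_two).mp this)
    rw [← h2]; exact ringChar.charP F
  have h2z : (2 : F) = 0 := by
    have := CharP.cast_eq_zero F 2
    simpa using this
  -- facts about w
  have hw0 : w ≠ 0 := by
    rintro rfl; simp at hw
  have hw1 : w ≠ 1 := by
    rintro rfl
    exact one_ne_zero (α := F) (by linear_combination hw - h2z)
  have hw2 : w ^ 2 = w + 1 := by linear_combination hw - (w + 1) * h2z
  have hw2ne0 : w ^ 2 ≠ 0 := pow_ne_zero 2 hw0
  have hw2ne1 : w ^ 2 ≠ 1 := fun h => hw0 (by linear_combination hw - h - h2z)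
  have hw2new : w ^ 2 ≠ w := fun h => hw1 (mul_left_cancel₀ hw0 (by linear_combination h))
  have hall : ∀ x : F, x = 0 ∨ x = 1 ∨ x = w ∨ x = w ^ 2 := by
    have huniv : ({0, 1, w, w ^ 2} : Finset F) = Finset.univ := by
      apply Finset.eq_univ_of_card
      rw [hF]
      rw [Finset.card_insert_of_notMem, Finset.card_insert_of_notMem,
          Finset.card_insert_of_notMem, Finset.card_singleton]
      · simp [Ne.symm hw2new]
      · simp [Ne.symm hw1, Ne.symm hw2ne1]
      · simp [Ne.symm hw0, Ne.symm hw2ne0]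
    intro x
    have hx : x ∈ ({0, 1, w, w ^ 2} : Finset F) := huniv ▸ Finset.mem_univ x
    simpa using hx
  -- constants
  have hconst_inj : ∀ a b : F, (fun _ : Fin (2 ^ k - 1) => a) = (fun _ => b) → a = b :=
    fun a b h => congrFun h i0
  have hcnt_const : ∀ x γ : F, x ≠ γ → cnt (fun _ : Fin (2 ^ k - 1) => x) γ = 0 := by
    intro x γ hxγ
    simp [cnt, hxγ]
  have hnoconst : ∀ x : F, (fun _ : Fin (2 ^ k - 1) => x) ∈ C → x = 0 := by
    intro x hxC
    by_contra hx0
    have hne : (fun _ : Fin (2 ^ k - 1) => x) ≠ 0 := fun h => hx0 (congrFun h i0)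
    obtain ⟨h1, hwc, -⟩ := hasep _ hxC hne
    by_cases hx1 : x = 1
    · rw [hx1, hcnt_const 1 w (Ne.symm hw1)] at hwc; omega
    · rw [hcnt_const x 1 hx1] at h1; omega
  -- closure of the two constants = all constants
  have hKmem : ∀ v : Fin (2 ^ k - 1) → F,
      v ∈ AddSubgroup.closure ({fun _ => (1 : F), fun _ => w} : Set (Fin (2 ^ k - 1) → F)) ↔
      ∃ x : F, v = fun _ => x := by
    intro v
    constructor
    · intro hv
      induction hv using AddSubgroup.closure_induction with
      | mem y hy =>
        simp only [Set.mem_insert_iff, Set.mem_singleton_iff] at hy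
        rcases hy with rfl | rfl
        · exact ⟨1, rfl⟩
        · exact ⟨w, rfl⟩
      | zero => exact ⟨0, rfl⟩
      | add x y _ _ hx hy =>
        obtain ⟨a, rfl⟩ := hx; obtain ⟨b, rfl⟩ := hy
        exact ⟨a + b, rfl⟩
      | neg x _ hx =>
        obtain ⟨a, rfl⟩ := hx
        exact ⟨-a, rfl⟩
    · rintro ⟨x, rfl⟩
      rcases hall x with rfl | rfl | rfl | rfl
      · exact zero_mem _
      · exact AddSubgroup.subset_closure (Set.mem_insert _ _)
      · exact AddSubgroup.subset_closure (Set.mem_insert_of_mem _ rfl)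
      · have hrw : (fun _ : Fin (2 ^ k - 1) => w ^ 2) =
            (fun _ => (1 : F)) + fun _ => w := by
          funext i; simp [hw2, add_comm]
        rw [hrw]
        exact add_mem (AddSubgroup.subset_closure (Set.mem_insert _ _))
          (AddSubgroup.subset_closure (Set.mem_insert_of_mem _ rfl))
  have hC'mem : ∀ v, v ∈ C' ↔ ∃ c ∈ C, ∃ x : F, v = c + fun _ => x := by
    intro v
    rw [hC', AddSubgroup.mem_sup]
    constructor
    · rintro ⟨y, hy, z, hz, rfl⟩
      obtain ⟨x, rfl⟩ := (hKmem z).mp hz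
      exact ⟨y, hy, x, rfl⟩
    · rintro ⟨c, hc, x, rfl⟩
      exact ⟨c, hc, _, (hKmem _).mpr ⟨x, rfl⟩, rfl⟩
  -- injectivity of the decomposition
  have hinj : ∀ c ∈ C, ∀ c' ∈ C, ∀ x x' : F,
      c + (fun _ => x) = c' + (fun _ => x') → c = c' ∧ x = x' := by
    intro c hc c' hc' x x' h
    have hxx : x = x' := by
      have hmem : (fun _ : Fin (2 ^ k - 1) => x - x') ∈ C := by
        have heq : (fun _ : Fin (2 ^ k - 1) => x - x') = c' - c := by
          funext i
          have hi := congrFun h i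
          simp only [Pi.add_apply] at hi
          simp only [Pi.sub_apply]
          linear_combination hi
        rw [heq]; exact sub_mem hc' hc
      exact sub_eq_zero.mp (hnoconst _ hmem)
    subst hxx
    exact ⟨add_right_cancel h, rfl⟩
  -- weight computations
  have hwt_zero : wt (0 : Fin (2 ^ k - 1) → F) = 0 := by simp [wt]
  have hwt_const : ∀ x : F, x ≠ 0 → wt (fun _ : Fin (2 ^ k - 1) => x) = 2 ^ k - 1 := by
    intro x hx
    simp [wt, hx]
  have hwt_split : ∀ v : Fin (2 ^ k - 1) → F,
      wt v = cnt v 1 + cnt v w + cnt v (w ^ 2) := by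
    intro v
    unfold wt cnt
    have hpred : ∀ i ∈ Finset.univ, (v i ≠ 0) ↔ (v i = 1 ∨ v i = w ∨ v i = w ^ 2) := by
      intro i _
      constructor
      · intro hne
        rcases hall (v i) with h | h | h | h
        · exact absurd h hne
        · exact Or.inl h
        · exact Or.inr (Or.inl h)
        · exact Or.inr (Or.inr h)
      · rintro (h | h | h) <;> rw [h]
        exacts [one_ne_zero, hw0, hw2ne0]
    have hd2 : Disjoint (Finset.univ.filter fun i => v i = w)
        (Finset.univ.filter fun i => v i = w ^ 2) := by
      rw [Finset.disjoint_left]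
      intro i hi hj
      simp only [Finset.mem_filter] at hi hj
      exact hw2new (hi.2.symm.trans hj.2).symm
    have hd1 : Disjoint (Finset.univ.filter fun i => v i = 1)
        ((Finset.univ.filter fun i => v i = w) ∪ (Finset.univ.filter fun i => v i = w ^ 2)) := by
      rw [Finset.disjoint_left]
      intro i hi hj
      simp only [Finset.mem_union, Finset.mem_filter] at hi hj
      rcases hj with hj | hj
      · exact hw1 (hi.2.symm.trans hj.2).symm
      · exact hw2ne1 (hi.2.symm.trans hj.2).symm
    rw [Finset.filter_congr hpred, Finset.filter_or, Finset.filter_or,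
        Finset.card_union_of_disjoint hd1, Finset.card_union_of_disjoint hd2]
    omega
  have hwtC : ∀ c ∈ C, c ≠ 0 → wt c = 3 * 2 ^ (k - 2) := by
    intro c hc hc0
    obtain ⟨h1, h2, h3⟩ := hasep c hc hc0
    rw [hwt_split c, h1, h2, h3]; ring
  have hwt_mix : ∀ c ∈ C, c ≠ 0 → ∀ x : F, x ≠ 0 →
      wt (c + fun _ => x) = 3 * 2 ^ (k - 2) - 1 := by
    intro c hc hc0 x hx
    have hcx : cnt c x = 2 ^ (k - 2) := by
      obtain ⟨h1, h2, h3⟩ := hasep c hc hc0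
      rcases hall x with h | h | h | h
      · exact absurd h hx
      · rw [h]; exact h1
      · rw [h]; exact h2
      · rw [h]; exact h3
    have key : wt (c + fun _ => x) = (2 ^ k - 1) - cnt c x := by
      unfold wt cnt
      have hiff : ∀ i ∈ Finset.univ, ((c + fun _ => x : Fin (2 ^ k - 1) → F) i ≠ 0) ↔ ¬(c i = x) := by
        intro i _
        simp only [Pi.add_apply]
        constructor
        · intro h hcix
          exact h (by rw [hcix]; exact CharTwo.add_self_eq_zero x)
        · intro h hzero
          have hx' : c i = -x := eq_neg_of_add_eq_zero_left hzero
          rw [CharTwo.neg_eq] at hx'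
          exact h hx'
      rw [Finset.filter_congr hiff, Finset.filter_not,
          Finset.card_sdiff_of_subset (Finset.filter_subset _ _), Finset.card_univ, Fintype.card_fin]
    rw [key, hcx]
    omega
  -- bijection for cardinality
  set f : (Fin (2 ^ k - 1) → F) × F → (Fin (2 ^ k - 1) → F) :=
    (fun p => p.1 + fun _ => p.2) with hf
  have hbij : Set.BijOn f ((C : Set _) ×ˢ (Set.univ : Set F)) (C' : Set _) := by
    refine ⟨?_, ?_, ?_⟩
    · rintro ⟨c, x⟩ ⟨hc, -⟩
      exact (hC'mem _).mpr ⟨c, hc, x, rfl⟩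
    · rintro ⟨c, x⟩ ⟨hc, -⟩ ⟨c', x'⟩ ⟨hc', -⟩ h
      obtain ⟨h1, h2⟩ := hinj c hc c' hc' x x' h
      exact Prod.ext h1 h2
    · rintro v hv
      obtain ⟨c, hc, x, rfl⟩ := (hC'mem v).mp hv
      exact ⟨(c, x), ⟨hc, trivial⟩, rfl⟩
  have hCdiff : ((C : Set (Fin (2 ^ k - 1) → F)) \ {0}).ncard = 2 ^ k - 1 := by
    rw [Set.ncard_diff_singleton_of_mem (show (0 : Fin (2 ^ k - 1) → F) ∈ (C : Set _) from zero_mem C)]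
    rw [← Nat.card_coe_set_eq]
    simp only [SetLike.coe_sort_coe]
    rw [hcard]
  have hcompl : ({0}ᶜ : Set F).ncard = 3 := by
    have hc3 : ({0}ᶜ : Set F) = {1, w, w ^ 2} := by
      ext x
      simp only [Set.mem_compl_iff, Set.mem_singleton_iff, Set.mem_insert_iff]
      constructor
      · intro hx
        rcases hall x with h | h | h | h
        · exact absurd h hx
        · exact Or.inl h
        · exact Or.inr (Or.inl h)
        · exact Or.inr (Or.inr h)
      · rintro (rfl | rfl | rfl)
        exacts [one_ne_zero, hw0, hw2ne0]
    rw [hc3, Set.ncard_insert_of_notMem (by simp [Ne.symm hw1, Ne.symm hw2ne1]),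
        Set.ncard_insert_of_notMem (by simp [Ne.symm hw2new]), Set.ncard_singleton]
  -- Part 1: cardinality of C'
  have hcardC' : Nat.card C' = 2 ^ (k + 2) := by
    have h1 : (C' : Set (Fin (2 ^ k - 1) → F)).ncard
        = ((C : Set (Fin (2 ^ k - 1) → F)) ×ˢ (Set.univ : Set F)).ncard := by
      rw [← hbij.image_eq, Set.ncard_image_of_injOn hbij.injOn]
    have h2 : ((C : Set (Fin (2 ^ k - 1) → F)) ×ˢ (Set.univ : Set F)).ncard = 2 ^ k * 4 := by
      rw [← Nat.card_coe_set_eq, Nat.card_congr (Equiv.Set.prod _ _), Nat.card_prod,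
          Nat.card_congr (Equiv.Set.univ F)]
      simp only [SetLike.coe_sort_coe]
      rw [hcard, Nat.card_eq_fintype_card, hF]
    rw [← SetLike.coe_sort_coe, Nat.card_coe_set_eq, h1, h2]
    omega
  refine ⟨hcardC', ?_, ?_, ?_, ?_⟩
  -- Part 2: minimum distance
  · intro v hv hv0
    obtain ⟨c, hc, x, rfl⟩ := (hC'mem v).mp hv
    by_cases hx : x = 0
    · subst hx
      have hceq : c + (fun _ : Fin (2 ^ k - 1) => (0 : F)) = c := by funext i; simp
      rw [hceq] at hv0 ⊢
      rw [hwtC c hc hv0]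
      omega
    · by_cases hc0 : c = 0
      · rw [hc0, zero_add] at hv0 ⊢
        have hx0 : x ≠ 0 := hx
        rw [hwt_const x hx0]
        omega
      · rw [hwt_mix c hc hc0 x hx]
  -- Part 3: count of weight 3*2^(k-2) - 1
  · have hS1 : {v | v ∈ C' ∧ wt v = 3 * 2 ^ (k - 2) - 1}
        = f '' (((C : Set (Fin (2 ^ k - 1) → F)) \ {0}) ×ˢ ({0}ᶜ : Set F)) := by
      ext v
      simp only [Set.mem_setOf_eq, Set.mem_image, Set.mem_prod, Set.mem_diff,
        Set.mem_singleton_iff, Set.mem_compl_iff, Prod.exists]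
      constructor
      · rintro ⟨hv, hwt⟩
        obtain ⟨c, hc, x, rfl⟩ := (hC'mem v).mp hv
        by_cases hx : x = 0
        · subst hx
          have hceq : c + (fun _ : Fin (2 ^ k - 1) => (0 : F)) = c := by funext i; simp
          rw [hceq] at hwt ⊢
          by_cases hc0 : c = 0
          · rw [hc0, hwt_zero] at hwt; omega
          · rw [hwtC c hc hc0] at hwt; omega
        · by_cases hc0 : c = 0
          · rw [hc0, zero_add, hwt_const x hx] at hwt; omega
          · exact ⟨c, x, ⟨⟨hc, hc0⟩, hx⟩, rfl⟩
      · rintro ⟨c, x, ⟨⟨hc, hc0⟩, hx⟩, rfl⟩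
        exact ⟨(hC'mem _).mpr ⟨c, hc, x, rfl⟩, hwt_mix c hc hc0 x hx⟩
    rw [hS1, Set.ncard_image_of_injOn
      (hbij.injOn.mono (Set.prod_mono Set.diff_subset (Set.subset_univ _)))]
    rw [← Nat.card_coe_set_eq, Nat.card_congr (Equiv.Set.prod _ _), Nat.card_prod,
        Nat.card_coe_set_eq, Nat.card_coe_set_eq, hCdiff, hcompl]
    omega
  -- Part 4: count of weight 3*2^(k-2)
  · have hS2 : {v | v ∈ C' ∧ wt v = 3 * 2 ^ (k - 2)}
        = (C : Set (Fin (2 ^ k - 1) → F)) \ {0} := by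
      ext v
      simp only [Set.mem_setOf_eq, Set.mem_diff, Set.mem_singleton_iff, SetLike.mem_coe]
      constructor
      · rintro ⟨hv, hwt⟩
        obtain ⟨c, hc, x, rfl⟩ := (hC'mem v).mp hv
        by_cases hx : x = 0
        · subst hx
          have hceq : c + (fun _ : Fin (2 ^ k - 1) => (0 : F)) = c := by funext i; simp
          rw [hceq] at hwt ⊢
          by_cases hc0 : c = 0
          · rw [hc0, hwt_zero] at hwt; omega
          · exact ⟨hc, hc0⟩
        · by_cases hc0 : c = 0
          · rw [hc0, zero_add, hwt_const x hx] at hwt; omega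
          · rw [hwt_mix c hc hc0 x hx] at hwt; omega
      · rintro ⟨hv, hv0⟩
        refine ⟨(hC'mem v).mpr ⟨v, hv, 0, ?_⟩, hwtC v hv hv0⟩
        funext i; simp
    rw [hS2, hCdiff]
  -- Part 5: count of weight 2^k - 1
  · have hS3 : {v | v ∈ C' ∧ wt v = 2 ^ k - 1}
        = ({(fun _ => (1 : F)), (fun _ => w), (fun _ => w ^ 2)} : Set (Fin (2 ^ k - 1) → F)) := by
      ext v
      simp only [Set.mem_setOf_eq, Set.mem_insert_iff, Set.mem_singleton_iff]
      constructor
      · rintro ⟨hv, hwt⟩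
        obtain ⟨c, hc, x, rfl⟩ := (hC'mem v).mp hv
        by_cases hx : x = 0
        · subst hx
          have hceq : c + (fun _ : Fin (2 ^ k - 1) => (0 : F)) = c := by funext i; simp
          rw [hceq] at hwt ⊢
          by_cases hc0 : c = 0
          · rw [hc0, hwt_zero] at hwt; omega
          · rw [hwtC c hc hc0] at hwt; omega
        · by_cases hc0 : c = 0
          · rw [hc0, zero_add] at hwt ⊢
            rcases hall x with h | h | h | h
            · exact absurd h hx
            · exact Or.inl (by rw [h])
            · exact Or.inr (Or.inl (by rw [h]))
            · exact Or.inr (Or.inr (by rw [h]))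
          · rw [hwt_mix c hc hc0 x hx] at hwt; omega
      · have hmemK : ∀ x : F, x ≠ 0 →
            ((fun _ : Fin (2 ^ k - 1) => x) ∈ C' ∧ wt (fun _ : Fin (2 ^ k - 1) => x) = 2 ^ k - 1) := by
          intro x hx
          refine ⟨(hC'mem _).mpr ⟨0, zero_mem C, x, ?_⟩, hwt_const x hx⟩
          funext i; simp
        rintro (rfl | rfl | rfl)
        exacts [hmemK 1 one_ne_zero, hmemK w hw0, hmemK (w ^ 2) hw2ne0]
    rw [hS3, Set.ncard_insert_of_notMem, Set.ncard_insert_of_notMem, Set.ncard_singleton]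
    · simp only [Set.mem_singleton_iff]
      exact fun h => hw2new (hconst_inj _ _ h).symm
    · simp only [Set.mem_insert_iff, Set.mem_singleton_iff]
      rintro (h | h)
      · exact hw1 (hconst_inj _ _ h).symm
      · exact hw2ne1 (hconst_inj _ _ h).symm
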